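/- Let S ⊆ V be a seed set, let θ* be any distribution attaining the minimum of E_θ[R(c̃, S)] over θ ∈ Θ, and let i ∈ V \ S be a node with max_{γ ∈ Γ(S, i)} L(γ) > 0. Let Γ̄(S, i) := argmax_{γ ∈ Γ(S, i)} L(γ). Then θ*({c : some path γ ∈ Γ̄(S, i) has all its edges in c}) = π*_i = θ*({c : every path γ ∈ Γ̄(S, i) has all its edges in c}); that is, under θ* either all maximizing paths are live simultaneously or none is, and each of these events has probability π*_i. -/

import Mathlib

open scoped BigOperators
set_option linter.unusedSectionVars false
set_option maxHeartbeats 1000000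

namespace CorrIM

variable {V : Type*} [Fintype V] [DecidableEq V]

/-- A node `i` is influenced: `i ∈ S`, or `i` is reachable from some node of `S`
along the live edges of the scenario `c`. -/
def influenced (c : Finset (V × V)) (S : Finset V) (i : V) : Prop :=
  ∃ s ∈ S, Relation.ReflTransGen (fun a b : V => (a, b) ∈ c) s i

/-- `R c S` : the number of influenced nodes in scenario `c` with seed set `S`. -/
noncomputable def R (c : Finset (V × V)) (S : Finset V) : ℕ :=
  Set.ncard {i : V | influenced c S i}

/-- The Fréchet class `Θ` : probability distributions on scenarios (subsets of `E`)
whose marginals agree with the edge likelihoods `p`. -/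
def memTheta (E : Finset (V × V)) (p : V × V → ℝ) (θ : Finset (V × V) → ℝ) : Prop :=
  (∀ c, 0 ≤ θ c) ∧ (∀ c, θ c ≠ 0 → c ⊆ E) ∧ (∑ c : Finset (V × V), θ c) = 1 ∧
    ∀ e ∈ E, (∑ c : Finset (V × V), if e ∈ c then θ c else 0) = p e

/-- Expected number of influenced nodes under the distribution `θ`. -/
noncomputable def expInf (θ : Finset (V × V) → ℝ) (S : Finset V) : ℝ :=
  ∑ c : Finset (V × V), θ c * (R c S : ℝ)

/-- The correlation robust influence function `f^corr`. -/
noncomputable def fcorr (E : Finset (V × V)) (p : V × V → ℝ) (S : Finset V) : ℝ :=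
  sInf {x : ℝ | ∃ θ, memTheta E p θ ∧ x = expInf θ S}

open Classical in
/-- Probability of the event `A` under the distribution `θ`. -/
noncomputable def prob (θ : Finset (V × V) → ℝ) (A : Finset (V × V) → Prop) : ℝ :=
  ∑ c : Finset (V × V), if A c then θ c else 0

/-- `γ` (a list of nodes `i₀, i₁, …, i_λ`, `λ ≥ 1`) is a directed path from the
seed set `S` to the node `i` using edges of `E`. -/
def IsPathFrom (E : Finset (V × V)) (S : Finset V) (i : V) (γ : List V) : Prop :=
  2 ≤ γ.length ∧ (∃ s ∈ S, γ.head? = some s) ∧ γ.getLast? = some i ∧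
    γ.Chain' (fun a b : V => (a, b) ∈ E)

/-- The list of edges `(i₀,i₁), …, (i_{λ-1}, i_λ)` of a path `γ = [i₀, …, i_λ]`. -/
def pathEdges (γ : List V) : List (V × V) := γ.zip γ.tail

/-- The weight `L(γ) = 1 - ∑_{l=1}^{λ} (1 - p(i_{l-1}, i_l))` of a path. -/
noncomputable def L (p : V × V → ℝ) (γ : List V) : ℝ :=
  1 - ((pathEdges γ).map (fun e => 1 - p e)).sum

/-- `π*_i = max(0, max_{γ ∈ Γ(S,i)} L(γ))`, with value `0` when `Γ(S,i) = ∅`. -/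
noncomputable def piStar (E : Finset (V × V)) (p : V × V → ℝ) (S : Finset V) (i : V) : ℝ :=
  sSup (insert 0 {x : ℝ | ∃ γ : List V, IsPathFrom E S i γ ∧ x = L p γ})

/-- The independent cascade distribution `θ_ic` : each edge of `E` is live
independently with probability `p e`. -/
noncomputable def thetaIC (E : Finset (V × V)) (p : V × V → ℝ) (c : Finset (V × V)) : ℝ :=
  if c ⊆ E then (∏ e ∈ c, p e) * ∏ e ∈ E \ c, (1 - p e) else 0

/-- The independent cascade influence function `f^ic`. -/
noncomputable def fic (E : Finset (V × V)) (p : V × V → ℝ) (S : Finset V) : ℝ :=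
  expInf (thetaIC E p) S


/-! ### list lemmas -/

lemma pathEdges_nil : pathEdges ([] : List V) = [] := rfl
lemma pathEdges_single (x : V) : pathEdges [x] = [] := rfl
lemma pathEdges_cons_cons (y z : V) (l : List V) :
    pathEdges (y :: z :: l) = (y, z) :: pathEdges (z :: l) := rfl

lemma chain'_pathEdges {r : V → V → Prop} : ∀ {l : List V}, l.Chain' r →
    ∀ e ∈ pathEdges l, r e.1 e.2
  | [], _, e, he => by simp [pathEdges] at he
  | [x], _, e, he => by simp [pathEdges] at he
  | x :: y :: l, h, e, he => by
      rw [pathEdges_cons_cons] at he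
      simp only [List.Chain', List.isChain_cons_cons] at h
      rcases List.mem_cons.1 he with rfl | he
      · exact h.1
      · exact chain'_pathEdges h.2 e he

lemma chain'_of_pathEdges {r : V → V → Prop} : ∀ {l : List V},
    (∀ e ∈ pathEdges l, r e.1 e.2) → l.Chain' r
  | [], _ => List.IsChain.nil
  | [x], _ => List.IsChain.singleton x
  | x :: y :: l, h => by
      simp only [List.Chain', List.isChain_cons_cons]
      refine ⟨h (x, y) ?_, chain'_of_pathEdges fun e he => h e ?_⟩
      · rw [pathEdges_cons_cons]; exact List.mem_cons_self
      · rw [pathEdges_cons_cons]; exact List.mem_cons_of_mem _ he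

lemma pathEdges_append_cons : ∀ (a : List V) (x : V) (d : List V),
    pathEdges (a ++ x :: d) = pathEdges (a ++ [x]) ++ pathEdges (x :: d)
  | [], x, d => by simp [pathEdges_single]
  | [y], x, d => by simp [pathEdges_cons_cons, pathEdges_single]
  | y :: z :: a, x, d => by
      have := pathEdges_append_cons (z :: a) x d
      simp only [List.cons_append, pathEdges_cons_cons] at *
      rw [this]

lemma rtg_of_chain' {r : V → V → Prop} : ∀ (l : List V) (x : V), (x :: l).Chain' r →
    Relation.ReflTransGen r x ((x :: l).getLast (List.cons_ne_nil x l))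
  | [], x, _ => by simpa [List.getLast] using Relation.ReflTransGen.refl
  | y :: l, x, h => by
      simp only [List.Chain', List.isChain_cons_cons] at h
      have ih := rtg_of_chain' l y h.2
      rw [List.getLast_cons (List.cons_ne_nil y l)]
      exact Relation.ReflTransGen.head h.1 ih

lemma influenced_of_live {E : Finset (V × V)} {S : Finset V} {i : V} {γ : List V}
    {c : Finset (V × V)} (hγ : IsPathFrom E S i γ) (hlive : ∀ e ∈ pathEdges γ, e ∈ c) :
    influenced c S i := by
  obtain ⟨hlen, ⟨s, hs, hhead⟩, hlast, _⟩ := hγ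
  cases γ with
  | nil => simp at hhead
  | cons x l =>
    have hchc : (x :: l).Chain' (fun a b : V => (a, b) ∈ c) :=
      chain'_of_pathEdges fun e he => hlive e he
    have hrtg := rtg_of_chain' l x hchc
    have hx : s = x := by simpa using hhead.symm
    have hlast' : (x :: l).getLast (List.cons_ne_nil x l) = i := by
      rw [List.getLast?_eq_getLast (List.cons_ne_nil x l)] at hlast
      simpa using hlast
    exact ⟨s, hs, by rw [hx]; rw [hlast'] at hrtg; exact hrtg⟩

/-! ### weights and distances -/

noncomputable def Wt (p : V × V → ℝ) (γ : List V) : ℝ :=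
  ((pathEdges γ).map (fun e => 1 - p e)).sum

lemma L_eq (p : V × V → ℝ) (γ : List V) : L p γ = 1 - Wt p γ := rfl

variable {E : Finset (V × V)} {p : V × V → ℝ} {S : Finset V}

lemma Wt_nonneg (hp : ∀ e ∈ E, 0 ≤ p e ∧ p e ≤ 1) {γ : List V}
    (hch : γ.Chain' (fun a b : V => (a, b) ∈ E)) : 0 ≤ Wt p γ := by
  apply List.sum_nonneg
  intro x hx
  obtain ⟨e, he, rfl⟩ := List.mem_map.1 hx
  have := chain'_pathEdges hch e he
  linarith [(hp e this).2]

noncomputable def Dfun (E : Finset (V × V)) (p : V × V → ℝ) (S : Finset V) (j : V) : ℝ :=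
  if j ∈ S then 0 else sInf (insert 2 {x : ℝ | ∃ γ, IsPathFrom E S j γ ∧ x = Wt p γ})

noncomputable def Ffun (E : Finset (V × V)) (p : V × V → ℝ) (S : Finset V) (j : V) : ℝ :=
  max 0 (1 - Dfun E p S j)

lemma Dset_lb (hp : ∀ e ∈ E, 0 ≤ p e ∧ p e ≤ 1) (j : V) :
    ∀ x ∈ insert 2 {x : ℝ | ∃ γ, IsPathFrom E S j γ ∧ x = Wt p γ}, (0:ℝ) ≤ x := by
  rintro x (rfl | ⟨γ, hγ, rfl⟩)
  · norm_num
  · exact Wt_nonneg hp hγ.2.2.2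

lemma Dset_bddBelow (hp : ∀ e ∈ E, 0 ≤ p e ∧ p e ≤ 1) (j : V) :
    BddBelow (insert 2 {x : ℝ | ∃ γ, IsPathFrom E S j γ ∧ x = Wt p γ}) :=
  ⟨0, fun x hx => Dset_lb hp j x hx⟩

lemma Dfun_nonneg (hp : ∀ e ∈ E, 0 ≤ p e ∧ p e ≤ 1) (j : V) : 0 ≤ Dfun E p S j := by
  rw [Dfun]
  split
  · exact le_refl 0
  · exact le_csInf ⟨2, Set.mem_insert _ _⟩ fun x hx => Dset_lb hp j x hx

lemma Dfun_le_two (hp : ∀ e ∈ E, 0 ≤ p e ∧ p e ≤ 1) (j : V) : Dfun E p S j ≤ 2 := by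
  rw [Dfun]
  split
  · norm_num
  · exact csInf_le (Dset_bddBelow hp j) (Set.mem_insert _ _)

lemma Dfun_le_Wt (hp : ∀ e ∈ E, 0 ≤ p e ∧ p e ≤ 1) {j : V} {γ : List V}
    (hγ : IsPathFrom E S j γ) : Dfun E p S j ≤ Wt p γ := by
  rw [Dfun]
  split
  · exact Wt_nonneg hp hγ.2.2.2
  · exact csInf_le (Dset_bddBelow hp j) (Set.mem_insert_of_mem _ ⟨γ, hγ, rfl⟩)

lemma isPathFrom_append {a b : V} {γ : List V} (hγ : IsPathFrom E S a γ)
    (hab : (a, b) ∈ E) :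
    IsPathFrom E S b (γ ++ [b]) ∧ Wt p (γ ++ [b]) = Wt p γ + (1 - p (a, b)) := by
  obtain ⟨hlen, ⟨s, hs, hhead⟩, hlast, hchain⟩ := hγ
  have hne : γ ≠ [] := by
    intro h; rw [h] at hlen; simp at hlen
  have hlast' : γ.getLast hne = a := by
    rw [List.getLast?_eq_getLast hne] at hlast; simpa using hlast
  obtain ⟨γ', rfl⟩ : ∃ γ', γ = γ' ++ [a] := ⟨γ.dropLast, by
    conv_lhs => rw [← List.dropLast_append_getLast hne]
    rw [hlast']⟩
  constructor
  · refine ⟨?_, ⟨s, hs, ?_⟩, ?_, ?_⟩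
    · simp only [List.length_append] at hlen ⊢; omega
    · rw [List.head?_append (l := γ' ++ [a]) (l' := [b]), hhead]; rfl
    · rw [List.getLast?_append]; rfl
    · rw [List.append_assoc]
      unfold List.Chain' at hchain ⊢
      rw [List.isChain_append] at hchain ⊢
      refine ⟨hchain.1, ?_, ?_⟩
      · exact List.isChain_pair.2 hab
      · intro x hx y hy
        have hya : a = y := by simpa using hy
        subst hya
        exact hchain.2.2 x hx a (by simp)
  · rw [List.append_assoc]
    have h1 := pathEdges_append_cons γ' a [b]
    simp only [Wt]
    rw [show γ' ++ ([a] ++ [b]) = γ' ++ a :: [b] by simp, h1, List.map_append, List.sum_append]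
    have h2 : pathEdges (a :: [b]) = [(a, b)] := rfl
    have h3 : γ' ++ a :: [] = γ' ++ [a] := rfl
    rw [h2, h3]
    simp

lemma Dfun_triangle (hp : ∀ e ∈ E, 0 ≤ p e ∧ p e ≤ 1) {a b : V} (hab : (a, b) ∈ E) :
    Dfun E p S b ≤ Dfun E p S a + (1 - p (a, b)) := by
  have hw : 0 ≤ 1 - p (a, b) := by linarith [(hp _ hab).2]
  by_cases hbS : b ∈ S
  · have hDb : Dfun E p S b = 0 := by rw [Dfun, if_pos hbS]
    have := Dfun_nonneg hp (S := S) a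
    rw [hDb]; linarith
  have hDb : Dfun E p S b = sInf (insert 2 {x : ℝ | ∃ γ, IsPathFrom E S b γ ∧ x = Wt p γ}) := by
    rw [Dfun, if_neg hbS]
  by_cases haS : a ∈ S
  · have hDa : Dfun E p S a = 0 := by rw [Dfun, if_pos haS]
    have hpath : IsPathFrom E S b [a, b] := by
      refine ⟨by simp, ⟨a, haS, rfl⟩, by simp, ?_⟩
      exact List.isChain_pair.2 hab
    have hwt : Wt p [a, b] = 1 - p (a, b) := by
      have h2 : pathEdges [a, b] = [(a, b)] := rfl
      simp [Wt, h2]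
    have := csInf_le (Dset_bddBelow hp b) (Set.mem_insert_of_mem _ ⟨_, hpath, rfl⟩)
    rw [hDb, hDa, hwt] at *
    linarith
  · have hDa : Dfun E p S a = sInf (insert 2 {x : ℝ | ∃ γ, IsPathFrom E S a γ ∧ x = Wt p γ}) := by
      rw [Dfun, if_neg haS]
    rw [hDb, hDa, ← sub_le_iff_le_add]
    refine le_csInf ⟨2, Set.mem_insert _ _⟩ ?_
    rintro x (rfl | ⟨γ, hγ, rfl⟩)
    · have h1 : Dfun E p S b ≤ 2 := Dfun_le_two hp b
      rw [hDb] at h1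
      linarith
    · obtain ⟨hpath, hwt⟩ := isPathFrom_append hγ hab
      have := Dfun_le_Wt hp hpath
      rw [hwt, hDb] at this
      linarith

/-! ### piStar characterization -/

lemma Lset_bddAbove (hp : ∀ e ∈ E, 0 ≤ p e ∧ p e ≤ 1) (j : V) :
    BddAbove {x : ℝ | ∃ γ : List V, IsPathFrom E S j γ ∧ x = L p γ} := by
  refine ⟨1, ?_⟩
  rintro x ⟨γ, hγ, rfl⟩
  rw [L_eq]
  linarith [Wt_nonneg hp hγ.2.2.2]

lemma piStar_eq_Ffun (hp : ∀ e ∈ E, 0 ≤ p e ∧ p e ≤ 1) {j : V} (hj : j ∉ S) :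
    piStar E p S j = Ffun E p S j := by
  have hD : Dfun E p S j = sInf (insert 2 {x : ℝ | ∃ γ, IsPathFrom E S j γ ∧ x = Wt p γ}) := by
    rw [Dfun, if_neg hj]
  have hbdd : BddAbove (insert 0 {x : ℝ | ∃ γ : List V, IsPathFrom E S j γ ∧ x = L p γ}) := by
    obtain ⟨u, hu⟩ := Lset_bddAbove hp (S := S) j
    refine ⟨max 0 u, ?_⟩
    rintro x (rfl | hx)
    · exact le_max_left _ _
    · exact le_max_of_le_right (hu hx)
  have hsup0 : (0:ℝ) ≤ sSup (insert 0 {x : ℝ | ∃ γ : List V, IsPathFrom E S j γ ∧ x = L p γ}) :=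
    le_csSup hbdd (Set.mem_insert _ _)
  rw [piStar, Ffun]
  apply le_antisymm
  · apply csSup_le ⟨0, Set.mem_insert _ _⟩
    rintro x (rfl | ⟨γ, hγ, rfl⟩)
    · exact le_max_left _ _
    · refine le_max_of_le_right ?_
      rw [L_eq]
      linarith [Dfun_le_Wt hp hγ]
  · refine max_le hsup0 ?_
    have : 1 - sSup (insert 0 {x : ℝ | ∃ γ : List V, IsPathFrom E S j γ ∧ x = L p γ})
        ≤ Dfun E p S j := by
      rw [hD]
      refine le_csInf ⟨2, Set.mem_insert _ _⟩ ?_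
      rintro x (rfl | ⟨γ, hγ, rfl⟩)
      · linarith
      · have := le_csSup hbdd (Set.mem_insert_of_mem _ ⟨γ, hγ, rfl⟩)
        rw [L_eq] at this
        linarith
    linarith

/-! ### shortening and attainment -/

lemma sublist_pair {x : V} : ∀ {l : List V}, [x, x].Sublist l →
    ∃ a b c : List V, l = a ++ x :: (b ++ x :: c)
  | [], h => by simp at h
  | y :: t, h => by
      cases h with
      | cons _ h' =>
          obtain ⟨a, b, c, rfl⟩ := sublist_pair h'
          exact ⟨y :: a, b, c, by simp⟩
      | cons_cons _ h' =>
          have hx : x ∈ t := h'.subset (by simp)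
          obtain ⟨b, c, rfl⟩ := List.append_of_mem hx
          exact ⟨[], b, c, by simp⟩

lemma exists_nodup_path (hp : ∀ e ∈ E, 0 ≤ p e ∧ p e ≤ 1) {i : V} (hi : i ∉ S) :
    ∀ (n : ℕ) (γ : List V), γ.length ≤ n → IsPathFrom E S i γ →
      ∃ γ', IsPathFrom E S i γ' ∧ γ'.Nodup ∧ Wt p γ' ≤ Wt p γ := by
  intro n
  induction n with
  | zero => intro γ hlen hγ; have := hγ.1; omega
  | succ n ih =>
    intro γ hlen hγ
    by_cases hnd : γ.Nodup
    · exact ⟨γ, hγ, hnd, le_rfl⟩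
    have hxx : ∃ x, [x, x].Sublist γ := by
      by_contra hcon
      push_neg at hcon
      exact hnd (List.nodup_iff_sublist.2 hcon)
    obtain ⟨x, hxx⟩ := hxx
    obtain ⟨a, b, c, rfl⟩ := sublist_pair hxx
    obtain ⟨hlen2, ⟨s, hs, hhead⟩, hlast, hchain⟩ := hγ
    have hdecγ : pathEdges (a ++ x :: (b ++ x :: c))
        = pathEdges (a ++ [x]) ++ (pathEdges (x :: (b ++ [x])) ++ pathEdges (x :: c)) := by
      rw [pathEdges_append_cons a x (b ++ x :: c)]
      congr 1
      have h2 := pathEdges_append_cons (x :: b) x c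
      simpa using h2
    have hsub : ∀ e ∈ pathEdges (a ++ x :: c), e ∈ pathEdges (a ++ x :: (b ++ x :: c)) := by
      intro e he
      rw [pathEdges_append_cons a x c] at he
      rw [hdecγ]
      rcases List.mem_append.1 he with h | h
      · exact List.mem_append.2 (Or.inl h)
      · exact List.mem_append.2 (Or.inr (List.mem_append.2 (Or.inr h)))
    have hlast2 : (x :: (b ++ x :: c)).getLast? = (x :: c).getLast? := by
      rw [show x :: (b ++ x :: c) = (x :: b) ++ (x :: c) by simp, List.getLast?_append,
        List.getLast?_eq_getLast (List.cons_ne_nil x c)]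
      rfl
    have hlast' : (a ++ x :: c).getLast? = some i := by
      rw [List.getLast?_append, ← hlast2, ← List.getLast?_append]
      exact hlast
    have hhead' : (a ++ x :: c).head? = some s := by
      simp only [List.head?_append, List.head?_cons] at hhead ⊢
      exact hhead
    have hlen' : 2 ≤ (a ++ x :: c).length := by
      rcases a with _ | ⟨y, a⟩
      · rcases c with _ | ⟨z, c⟩
        · exfalso
          have hsx : x = s := by simpa using hhead
          have hix : x = i := by
            rw [List.nil_append] at hlast'
            simpa using hlast'
          exact hi (by rw [← hix, hsx]; exact hs)
        · simp
      · simp only [List.cons_append, List.length_cons, List.length_append]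
        omega
    have hchain' : (a ++ x :: c).Chain' (fun a b : V => (a, b) ∈ E) :=
      chain'_of_pathEdges fun e he => chain'_pathEdges hchain e (hsub e he)
    have hpath' : IsPathFrom E S i (a ++ x :: c) := ⟨hlen', ⟨s, hs, hhead'⟩, hlast', hchain'⟩
    have hmid : 0 ≤ ((pathEdges (x :: (b ++ [x]))).map (fun e => 1 - p e)).sum := by
      apply List.sum_nonneg
      intro y hy
      obtain ⟨e, he, rfl⟩ := List.mem_map.1 hy
      have heγ : e ∈ pathEdges (a ++ x :: (b ++ x :: c)) := by
        rw [hdecγ]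
        exact List.mem_append.2 (Or.inr (List.mem_append.2 (Or.inl he)))
      have heE := chain'_pathEdges hchain e heγ
      linarith [(hp e heE).2]
    have hwt : Wt p (a ++ x :: c) ≤ Wt p (a ++ x :: (b ++ x :: c)) := by
      simp only [Wt]
      rw [hdecγ, pathEdges_append_cons a x c]
      simp only [List.map_append, List.sum_append]
      linarith
    have hlt : (a ++ x :: c).length ≤ n := by
      simp only [List.length_append, List.length_cons] at hlen ⊢
      omega
    obtain ⟨γ', h1, h2, h3⟩ := ih (a ++ x :: c) hlt hpath'
    exact ⟨γ', h1, h2, le_trans h3 hwt⟩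

lemma exists_max_path (hp : ∀ e ∈ E, 0 ≤ p e ∧ p e ≤ 1) {i : V} (hi : i ∉ S)
    (hne : {x : ℝ | ∃ γ : List V, IsPathFrom E S i γ ∧ x = L p γ}.Nonempty) :
    ∃ γ : List V, IsPathFrom E S i γ ∧
      L p γ = sSup {x : ℝ | ∃ γ' : List V, IsPathFrom E S i γ' ∧ x = L p γ'} := by
  classical
  set X := {x : ℝ | ∃ γ' : List V, IsPathFrom E S i γ' ∧ x = L p γ'} with hXdef
  set N : Set (List V) := {γ | IsPathFrom E S i γ ∧ γ.Nodup} with hNdef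
  have hNfin : N.Finite := by
    apply Set.Finite.subset (List.finite_length_le V (Fintype.card V))
    intro l hl
    exact hl.2.length_le_card
  set T := L p '' N with hTdef
  have hTfin : T.Finite := hNfin.image _
  have hTne : T.Nonempty := by
    obtain ⟨x0, γ0, hγ0, rfl⟩ := hne
    obtain ⟨γ', h1, h2, _⟩ := exists_nodup_path hp hi γ0.length γ0 le_rfl hγ0
    exact ⟨L p γ', ⟨γ', ⟨h1, h2⟩, rfl⟩⟩
  have hTX : T ⊆ X := by
    rintro t ⟨γ, hγ, rfl⟩
    exact ⟨γ, hγ.1, rfl⟩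
  have hsup : sSup X = sSup T := by
    apply le_antisymm
    · apply csSup_le hne
      rintro x ⟨γ, hγ, rfl⟩
      obtain ⟨γ', h1, h2, h3⟩ := exists_nodup_path hp hi γ.length γ le_rfl hγ
      have : L p γ ≤ L p γ' := by rw [L_eq, L_eq]; linarith
      exact le_trans this (le_csSup hTfin.bddAbove ⟨γ', ⟨h1, h2⟩, rfl⟩)
    · exact csSup_le hTne fun t ht => le_csSup (Lset_bddAbove hp i) (hTX ht)
  obtain ⟨γ, hγ, hLγ⟩ := hTne.csSup_mem hTfin
  exact ⟨γ, hγ.1, by rw [hLγ, hsup]⟩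

/-! ### probability lemmas -/

lemma prob_nonneg {θ : Finset (V × V) → ℝ} (h0 : ∀ c, 0 ≤ θ c) (A : Finset (V × V) → Prop) :
    0 ≤ prob θ A := by
  classical
  unfold prob
  apply Finset.sum_nonneg
  intro c _
  split
  · exact h0 c
  · exact le_rfl

lemma prob_mono {θ : Finset (V × V) → ℝ} (h0 : ∀ c, 0 ≤ θ c) {A B : Finset (V × V) → Prop}
    (h : ∀ c, A c → B c) : prob θ A ≤ prob θ B := by
  classical
  unfold prob
  apply Finset.sum_le_sum
  intro c _
  by_cases hA : A c
  · rw [if_pos hA, if_pos (h c hA)]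
  · rw [if_neg hA]
    split
    · exact h0 c
    · exact le_rfl

lemma prob_true {θ : Finset (V × V) → ℝ} (hθ : memTheta E p θ) (A : Finset (V × V) → Prop)
    (hA : ∀ c, A c) : prob θ A = 1 := by
  classical
  unfold prob
  rw [← hθ.2.2.1]
  exact Finset.sum_congr rfl fun c _ => if_pos (hA c)

lemma prob_le_one {θ : Finset (V × V) → ℝ} (hθ : memTheta E p θ) (A : Finset (V × V) → Prop) :
    prob θ A ≤ 1 := by
  have h := prob_mono (A := A) (B := fun _ => True) hθ.1 (fun c _ => trivial)
  rwa [prob_true hθ _ (fun _ => trivial)] at h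

lemma prob_diff {θ : Finset (V × V) → ℝ} (h0 : ∀ c, 0 ≤ θ c) {A B : Finset (V × V) → Prop}
    (h : ∀ c, A c → B c) :
    prob θ B - prob θ A = prob θ (fun c => B c ∧ ¬ A c) := by
  classical
  unfold prob
  rw [← Finset.sum_sub_distrib]
  apply Finset.sum_congr rfl
  intro c _
  by_cases hA : A c
  · rw [if_pos hA, if_pos (h c hA), if_neg (by tauto)]
    ring
  · rw [if_neg hA]
    by_cases hB : B c
    · rw [if_pos hB, if_pos ⟨hB, hA⟩]
      ring
    · rw [if_neg hB, if_neg (by tauto)]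
      ring

lemma prob_not_mem {θ : Finset (V × V) → ℝ} (hθ : memTheta E p θ) {e : V × V} (he : e ∈ E) :
    prob θ (fun c => e ∉ c) = 1 - p e := by
  classical
  have hm := hθ.2.2.2 e he
  have h1 := hθ.2.2.1
  unfold prob
  rw [eq_sub_iff_add_eq, ← hm, ← Finset.sum_add_distrib, ← h1]
  apply Finset.sum_congr rfl
  intro c _
  by_cases hec : e ∈ c
  · rw [if_neg (by simpa using hec), if_pos hec]
    ring
  · rw [if_pos hec, if_neg hec]
    ring

lemma prob_live_ge {θ : Finset (V × V) → ℝ} (hθ : memTheta E p θ) :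
    ∀ (l : List (V × V)), (∀ e ∈ l, e ∈ E) →
      1 - (l.map (fun e => 1 - p e)).sum ≤ prob θ (fun c => ∀ e ∈ l, e ∈ c) := by
  intro l
  induction l with
  | nil =>
    intro _
    have h := prob_true hθ (fun c => ∀ e ∈ ([] : List (V × V)), e ∈ c) (by simp)
    simp only [List.map_nil, List.sum_nil, sub_zero]
    rw [h]
  | cons e l ih =>
    intro hall
    have he : e ∈ E := hall e List.mem_cons_self
    have hl : ∀ x ∈ l, x ∈ E := fun x hx => hall x (List.mem_cons_of_mem _ hx)
    have key : prob θ (fun c => ∀ x ∈ l, x ∈ c)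
        ≤ prob θ (fun c => ∀ x ∈ e :: l, x ∈ c) + prob θ (fun c => e ∉ c) := by
      classical
      unfold prob
      rw [← Finset.sum_add_distrib]
      apply Finset.sum_le_sum
      intro c _
      beta_reduce
      have h0 := hθ.1 c
      by_cases hec : e ∈ c
      · by_cases hlc : ∀ x ∈ l, x ∈ c
        · have hcons : ∀ x ∈ e :: l, x ∈ c := by
            intro x hx
            rcases List.mem_cons.1 hx with rfl | hx
            · exact hec
            · exact hlc x hx
          rw [if_pos hlc, if_pos hcons, if_neg (by simpa using hec)]
          linarith
        · rw [if_neg hlc]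
          apply add_nonneg
          · split
            · exact h0
            · exact le_rfl
          · split
            · exact h0
            · exact le_rfl
      · have hnc : ¬∀ x ∈ e :: l, x ∈ c := fun h => hec (h e List.mem_cons_self)
        rw [if_neg hnc, if_pos hec, zero_add]
        split
        · exact le_rfl
        · exact h0
    have hnm := prob_not_mem hθ he
    have hih := ih hl
    have hsum : ((e :: l).map (fun e => 1 - p e)).sum
        = (1 - p e) + (l.map (fun e => 1 - p e)).sum := by
      simp
    rw [hsum]
    linarith

lemma prob_infl_ge {θ : Finset (V × V) → ℝ} (hθ : memTheta E p θ)
    (hp : ∀ e ∈ E, 0 ≤ p e ∧ p e ≤ 1) (j : V) :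
    Ffun E p S j ≤ prob θ (fun c => influenced c S j) := by
  have h0 : 0 ≤ prob θ (fun c => influenced c S j) := prob_nonneg hθ.1 _
  by_cases hjS : j ∈ S
  · have h1 : prob θ (fun c => influenced c S j) = 1 :=
      prob_true hθ _ (fun c => ⟨j, hjS, Relation.ReflTransGen.refl⟩)
    rw [h1, Ffun, Dfun, if_pos hjS]
    norm_num
  · rw [Ffun]
    refine max_le h0 ?_
    have hkey : 1 - prob θ (fun c => influenced c S j) ≤ Dfun E p S j := by
      rw [Dfun, if_neg hjS]
      refine le_csInf ⟨2, Set.mem_insert _ _⟩ ?_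
      rintro x (rfl | ⟨γ, hγ, rfl⟩)
      · linarith
      · have hlive : 1 - Wt p γ ≤ prob θ (fun c => ∀ e ∈ pathEdges γ, e ∈ c) :=
          prob_live_ge hθ (pathEdges γ) (fun e he => chain'_pathEdges hγ.2.2.2 e he)
        have hmono : prob θ (fun c => ∀ e ∈ pathEdges γ, e ∈ c)
            ≤ prob θ (fun c => influenced c S j) :=
          prob_mono hθ.1 (fun c hc => influenced_of_live hγ hc)
        linarith
    linarith

open Classical in
lemma expInf_eq (θ : Finset (V × V) → ℝ) (S : Finset V) :
    expInf θ S = ∑ j : V, prob θ (fun c => influenced c S j) := by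
  classical
  have hR : ∀ c, ((R c S : ℕ) : ℝ) = ∑ j : V, if influenced c S j then (1:ℝ) else 0 := by
    intro c
    rw [R, Set.ncard_eq_toFinset_card', Set.toFinset_setOf, Finset.card_filter]
    push_cast
    rfl
  unfold expInf
  calc ∑ c : Finset (V × V), θ c * (R c S : ℝ)
      = ∑ c : Finset (V × V), ∑ j : V, (if influenced c S j then θ c else 0) := by
        apply Finset.sum_congr rfl
        intro c _
        rw [hR, Finset.mul_sum]
        apply Finset.sum_congr rfl
        intro j _
        split
        · rw [mul_one]
        · rw [mul_zero]
    _ = ∑ j : V, ∑ c : Finset (V × V), (if influenced c S j then θ c else 0) :=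
        Finset.sum_comm
    _ = ∑ j : V, prob θ (fun c => influenced c S j) := rfl

/-! ### the worst-case coupling -/

open MeasureTheory

noncomputable def dpr (E : Finset (V × V)) (p : V × V → ℝ) (S : Finset V) (a : V) : ℝ :=
  min (Dfun E p S a) 1

noncomputable def dead (E : Finset (V × V)) (p : V × V → ℝ) (S : Finset V) (e : V × V) :
    Set ℝ :=
  if dpr E p S e.1 + (1 - p e) ≤ 1 then Set.Ioc (dpr E p S e.1) (dpr E p S e.1 + (1 - p e))
  else Set.Ioc (dpr E p S e.1) 1 ∪ Set.Ioc 0 (dpr E p S e.1 + (1 - p e) - 1)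

lemma dpr_nonneg (hp : ∀ e ∈ E, 0 ≤ p e ∧ p e ≤ 1) (a : V) : 0 ≤ dpr E p S a :=
  le_min (Dfun_nonneg hp a) zero_le_one

lemma dpr_le_one (a : V) : dpr E p S a ≤ 1 := min_le_right _ _

lemma dead_measurable (e : V × V) : MeasurableSet (dead E p S e) := by
  rw [dead]
  split
  · exact measurableSet_Ioc
  · exact measurableSet_Ioc.union measurableSet_Ioc

lemma dead_subset (hp : ∀ e ∈ E, 0 ≤ p e ∧ p e ≤ 1) {e : V × V} (he : e ∈ E) :
    dead E p S e ⊆ Set.Ioc 0 1 := by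
  have h0 : 0 ≤ dpr E p S e.1 := dpr_nonneg hp e.1
  have h1 : dpr E p S e.1 ≤ 1 := dpr_le_one e.1
  rw [dead]
  split_ifs with h
  · intro u hu
    exact ⟨lt_of_le_of_lt h0 hu.1, le_trans hu.2 h⟩
  · rintro u (hu | hu)
    · exact ⟨lt_of_le_of_lt h0 hu.1, hu.2⟩
    · exact ⟨hu.1, le_trans hu.2 (by linarith [(hp e he).1])⟩

lemma volume_dead (hp : ∀ e ∈ E, 0 ≤ p e ∧ p e ≤ 1) {e : V × V} (he : e ∈ E) :
    volume (dead E p S e) = ENNReal.ofReal (1 - p e) := by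
  have hw0 : 0 ≤ 1 - p e := by linarith [(hp e he).2]
  have hw1 : 1 - p e ≤ 1 := by linarith [(hp e he).1]
  have h0 : 0 ≤ dpr E p S e.1 := dpr_nonneg hp e.1
  have h1 : dpr E p S e.1 ≤ 1 := dpr_le_one e.1
  rw [dead]
  split_ifs with h
  · rw [Real.volume_Ioc]
    congr 1
    ring
  · push_neg at h
    have hdisj : Disjoint (Set.Ioc (dpr E p S e.1) 1)
        (Set.Ioc (0:ℝ) (dpr E p S e.1 + (1 - p e) - 1)) := by
      rw [Set.disjoint_left]
      intro u hu hu'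
      have : u ≤ dpr E p S e.1 := le_trans hu'.2 (by linarith)
      exact absurd hu.1 (not_lt.2 this)
    rw [measure_union hdisj measurableSet_Ioc, Real.volume_Ioc, Real.volume_Ioc,
      ← ENNReal.ofReal_add (by linarith) (by linarith)]
    congr 1
    ring

lemma Ioc_subset_dead (e : V × V) :
    Set.Ioc (dpr E p S e.1) (min (dpr E p S e.1 + (1 - p e)) 1) ⊆ dead E p S e := by
  rw [dead]
  split_ifs with h
  · rw [min_eq_left h]
  · rw [min_eq_right (by push_neg at h; linarith)]
    exact Set.subset_union_left

lemma dpr_triangle (hp : ∀ e ∈ E, 0 ≤ p e ∧ p e ≤ 1) {a b : V} (hab : (a, b) ∈ E) :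
    dpr E p S b ≤ min (dpr E p S a + (1 - p (a, b))) 1 := by
  have hw0 : 0 ≤ 1 - p (a, b) := by linarith [(hp _ hab).2]
  refine le_min ?_ (dpr_le_one b)
  rcases le_total (Dfun E p S a) 1 with h | h
  · have ha : dpr E p S a = Dfun E p S a := min_eq_left h
    have := Dfun_triangle hp (S := S) hab
    have hb : dpr E p S b ≤ Dfun E p S b := min_le_left _ _
    rw [ha]
    linarith
  · have ha : dpr E p S a = 1 := min_eq_right h
    rw [ha]
    linarith [dpr_le_one (E := E) (p := p) (S := S) b]

open Classical in
noncomputable def cOf (E : Finset (V × V)) (p : V × V → ℝ) (S : Finset V) (u : ℝ) :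
    Finset (V × V) :=
  E.filter (fun e => u ∉ dead E p S e)

lemma mem_cOf {u : ℝ} {e : V × V} : e ∈ cOf E p S u ↔ e ∈ E ∧ u ∉ dead E p S e := by
  classical
  rw [cOf]
  simp

def Au (E : Finset (V × V)) (p : V × V → ℝ) (S : Finset V) (c : Finset (V × V)) : Set ℝ :=
  {u : ℝ | u ∈ Set.Ioc (0:ℝ) 1 ∧ cOf E p S u = c}

noncomputable def theta0 (E : Finset (V × V)) (p : V × V → ℝ) (S : Finset V)
    (c : Finset (V × V)) : ℝ := (volume (Au E p S c)).toReal

lemma Au_measurable (c : Finset (V × V)) : MeasurableSet (Au E p S c) := by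
  have hdec : Au E p S c = Set.Ioc 0 1 ∩ ⋂ e : V × V, {u : ℝ | e ∈ cOf E p S u ↔ e ∈ c} := by
    ext u
    simp only [Au, Set.mem_setOf_eq, Set.mem_inter_iff, Set.mem_iInter, Finset.ext_iff]
  rw [hdec]
  refine measurableSet_Ioc.inter (MeasurableSet.iInter fun e => ?_)
  by_cases heE : e ∈ E <;> by_cases hec : e ∈ c
  · have h : {u : ℝ | e ∈ cOf E p S u ↔ e ∈ c} = (dead E p S e)ᶜ := by
      ext u
      simp [mem_cOf, heE, hec]
    rw [h]
    exact (dead_measurable e).compl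
  · have h : {u : ℝ | e ∈ cOf E p S u ↔ e ∈ c} = dead E p S e := by
      ext u
      simp [mem_cOf, heE, hec]
    rw [h]
    exact dead_measurable e
  · have h : {u : ℝ | e ∈ cOf E p S u ↔ e ∈ c} = ∅ := by
      ext u
      simp [mem_cOf, heE, hec]
    rw [h]
    exact MeasurableSet.empty
  · have h : {u : ℝ | e ∈ cOf E p S u ↔ e ∈ c} = Set.univ := by
      ext u
      simp [mem_cOf, heE, hec]
    rw [h]
    exact MeasurableSet.univ

lemma Au_subset (c : Finset (V × V)) : Au E p S c ⊆ Set.Ioc 0 1 := fun _ hu => hu.1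

lemma volume_Au_ne_top (c : Finset (V × V)) : volume (Au E p S c) ≠ ⊤ := by
  refine ne_top_of_le_ne_top ?_ (measure_mono (Au_subset c))
  rw [Real.volume_Ioc]
  exact ENNReal.ofReal_ne_top

lemma Au_disjoint :
    (Set.univ : Set (Finset (V × V))).PairwiseDisjoint (Au E p S) := by
  intro c _ c' _ hcc
  refine Set.disjoint_left.2 fun u hu hu' => hcc ?_
  rw [← hu.2, ← hu'.2]

lemma sum_ite_theta0 (P : Finset (V × V) → Prop) [DecidablePred P] :
    (∑ c : Finset (V × V), if P c then theta0 E p S c else 0)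
      = (volume (⋃ c ∈ Finset.univ.filter P, Au E p S c)).toReal := by
  rw [measure_biUnion_finset
    (Set.PairwiseDisjoint.subset Au_disjoint (Set.subset_univ _))
    (fun c _ => Au_measurable c)]
  rw [ENNReal.toReal_sum (fun c _ => volume_Au_ne_top c)]
  rw [Finset.sum_filter]
  rfl

lemma Au_cover : ⋃ c ∈ (Finset.univ : Finset (Finset (V × V))), Au E p S c = Set.Ioc 0 1 := by
  ext u
  simp only [Set.mem_iUnion, exists_prop]
  constructor
  · rintro ⟨c, _, hu⟩
    exact hu.1
  · intro hu
    exact ⟨cOf E p S u, Finset.mem_univ _, hu, rfl⟩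

lemma theta0_memTheta (hp : ∀ e ∈ E, 0 ≤ p e ∧ p e ≤ 1) : memTheta E p (theta0 E p S) := by
  classical
  refine ⟨fun c => ENNReal.toReal_nonneg, ?_, ?_, ?_⟩
  · intro c hc
    by_contra hcE
    apply hc
    have hAu : Au E p S c = ∅ := by
      ext u
      simp only [Au, Set.mem_setOf_eq, Set.mem_empty_iff_false, iff_false, not_and]
      intro _ hcof
      exact hcE (hcof ▸ Finset.filter_subset _ E)
    rw [theta0, hAu]
    simp
  · have h := measure_biUnion_finset (μ := volume)
      (s := (Finset.univ : Finset (Finset (V × V))))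
      (Set.PairwiseDisjoint.subset (Au_disjoint (E := E) (p := p) (S := S)) (Set.subset_univ _))
      (fun c _ => Au_measurable c)
    rw [Au_cover] at h
    have hsum : ∑ c : Finset (V × V), theta0 E p S c
        = ((∑ c : Finset (V × V), volume (Au E p S c))).toReal :=
      (ENNReal.toReal_sum (fun c _ => volume_Au_ne_top c)).symm
    rw [hsum, ← h, Real.volume_Ioc]
    norm_num
  · intro e he
    have hU : ⋃ c ∈ Finset.univ.filter (fun c : Finset (V × V) => e ∈ c), Au E p S c
        = Set.Ioc 0 1 \ dead E p S e := by
      ext u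
      simp only [Set.mem_iUnion, exists_prop, Finset.mem_filter, Finset.mem_univ, true_and,
        Set.mem_diff]
      constructor
      · rintro ⟨c, hec, hu, rfl⟩
        exact ⟨hu, (mem_cOf.1 hec).2⟩
      · rintro ⟨hu, hd⟩
        exact ⟨cOf E p S u, mem_cOf.2 ⟨he, hd⟩, ⟨hu, rfl⟩⟩
    have h2 := sum_ite_theta0 (E := E) (p := p) (S := S) (fun c => e ∈ c)
    rw [hU] at h2
    rw [h2, measure_diff (dead_subset hp he) (dead_measurable e).nullMeasurableSet
      (by rw [volume_dead hp he]; exact ENNReal.ofReal_ne_top),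
      Real.volume_Ioc, volume_dead hp he]
    have hw0 : 0 ≤ 1 - p e := by linarith [(hp e he).2]
    rw [← ENNReal.ofReal_sub _ hw0]
    rw [ENNReal.toReal_ofReal (by linarith [(hp e he).1])]
    ring

lemma max_eq_one_sub_min (x : ℝ) : max 0 (1 - x) = 1 - min x 1 := by
  rcases le_total x 1 with h | h
  · rw [min_eq_left h, max_eq_right (by linarith)]
  · rw [min_eq_right h, max_eq_left (by linarith)]
    norm_num

lemma theta0_infl_le (hp : ∀ e ∈ E, 0 ≤ p e ∧ p e ≤ 1) (j : V) :
    prob (theta0 E p S) (fun c => influenced c S j) ≤ Ffun E p S j := by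
  classical
  by_cases hjS : j ∈ S
  · have h1 : Ffun E p S j = 1 := by
      rw [Ffun, Dfun, if_pos hjS]
      norm_num
    rw [h1]
    exact prob_le_one (theta0_memTheta hp) _
  · have hkey : ∀ u : ℝ, u ∈ Set.Ioc (0:ℝ) 1 → influenced (cOf E p S u) S j →
        dpr E p S j < u := by
      intro u hu hinfl
      obtain ⟨s, hsS, hrtg⟩ := hinfl
      have hgen : ∀ b : V, Relation.ReflTransGen (fun a b => (a, b) ∈ cOf E p S u) s b →
          b ∈ S ∨ dpr E p S b < u := by
        intro b hb
        induction hb with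
        | refl => exact Or.inl hsS
        | @tail x y h1 h2 ih =>
          right
          obtain ⟨hxyE, hdead⟩ := mem_cOf.1 h2
          have hxlt : dpr E p S x < u := by
            rcases ih with hxS | hxlt
            · have hD : Dfun E p S x = 0 := by rw [Dfun, if_pos hxS]
              have hd : dpr E p S x = 0 := by rw [dpr, hD]; simp
              rw [hd]
              exact hu.1
            · exact hxlt
          have hnot : u ∉ Set.Ioc (dpr E p S x) (min (dpr E p S x + (1 - p (x, y))) 1) :=
            fun hmem => hdead (Ioc_subset_dead (x, y) hmem)
          have hlt : min (dpr E p S x + (1 - p (x, y))) 1 < u := by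
            by_contra hle
            push_neg at hle
            exact hnot ⟨hxlt, hle⟩
          exact lt_of_le_of_lt (dpr_triangle hp hxyE) hlt
      rcases hgen j hrtg with h | h
      · exact absurd h hjS
      · exact h
    have hprob : prob (theta0 E p S) (fun c => influenced c S j)
        = (volume (⋃ c ∈ Finset.univ.filter (fun c : Finset (V × V) => influenced c S j),
            Au E p S c)).toReal := by
      unfold prob
      exact sum_ite_theta0 _
    have hsub : (⋃ c ∈ Finset.univ.filter (fun c : Finset (V × V) => influenced c S j),
        Au E p S c) ⊆ Set.Ioc (dpr E p S j) 1 := by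
      intro u hu
      simp only [Set.mem_iUnion, exists_prop, Finset.mem_filter, Finset.mem_univ,
        true_and] at hu
      obtain ⟨c, hinfl, huIoc, hcof⟩ := hu
      subst hcof
      exact ⟨hkey u huIoc hinfl, huIoc.2⟩
    have hle := measure_mono (μ := (volume : Measure ℝ)) hsub
    rw [Real.volume_Ioc] at hle
    have hto := ENNReal.toReal_mono ENNReal.ofReal_ne_top hle
    rw [ENNReal.toReal_ofReal (by linarith [dpr_le_one (E := E) (p := p) (S := S) j])] at hto
    have hF : Ffun E p S j = 1 - dpr E p S j := by
      rw [Ffun, max_eq_one_sub_min, dpr]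
    rw [hprob, hF]
    exact hto

lemma minimizer_infl (hp : ∀ e ∈ E, 0 ≤ p e ∧ p e ≤ 1) {θs : Finset (V × V) → ℝ}
    (hθs : memTheta E p θs)
    (hmin : ∀ θ : Finset (V × V) → ℝ, memTheta E p θ → expInf θs S ≤ expInf θ S) :
    ∀ j, prob θs (fun c => influenced c S j) = Ffun E p S j := by
  have hθ0 := theta0_memTheta (S := S) hp
  have h1 : ∀ j, Ffun E p S j ≤ prob θs (fun c => influenced c S j) :=
    fun j => prob_infl_ge hθs hp j
  have h2 : expInf θs S ≤ expInf (theta0 E p S) S := hmin _ hθ0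
  rw [expInf_eq, expInf_eq] at h2
  have h3 : ∑ j : V, prob (theta0 E p S) (fun c => influenced c S j) ≤ ∑ j : V, Ffun E p S j :=
    Finset.sum_le_sum fun j _ => theta0_infl_le hp j
  intro j
  by_contra hne
  have hlt : Ffun E p S j < prob θs (fun c => influenced c S j) :=
    lt_of_le_of_ne (h1 j) (Ne.symm hne)
  have h4 : ∑ j : V, Ffun E p S j < ∑ j : V, prob θs (fun c => influenced c S j) :=
    Finset.sum_lt_sum (fun j _ => h1 j) ⟨j, Finset.mem_univ j, hlt⟩
  linarith


/-- let `θ*` attain the minimum of `E_θ[R(c̃, S)]` over `Θ` and let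
`i ∈ V \ S` with `max_{γ ∈ Γ(S,i)} L(γ) > 0`. Then the `θ*`-probability that some
maximizing path is fully live equals `π*_i`, and so does the `θ*`-probability that
every maximizing path is fully live. -/
theorem maximizing_paths_live_together (E : Finset (V × V)) (p : V × V → ℝ)
    (hp : ∀ e ∈ E, 0 ≤ p e ∧ p e ≤ 1) (S : Finset V)
    (θs : Finset (V × V) → ℝ) (hθs : memTheta E p θs)
    (hmin : ∀ θ : Finset (V × V) → ℝ, memTheta E p θ → expInf θs S ≤ expInf θ S)
    (i : V) (hi : i ∉ S)
    (hpos : 0 < sSup {x : ℝ | ∃ γ : List V, IsPathFrom E S i γ ∧ x = L p γ}) :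
    prob θs (fun c => ∃ γ : List V,
        (IsPathFrom E S i γ ∧
          L p γ = sSup {x : ℝ | ∃ γ' : List V, IsPathFrom E S i γ' ∧ x = L p γ'}) ∧
        ∀ e ∈ pathEdges γ, e ∈ c) = piStar E p S i ∧
      prob θs (fun c => ∀ γ : List V,
        (IsPathFrom E S i γ ∧
          L p γ = sSup {x : ℝ | ∃ γ' : List V, IsPathFrom E S i γ' ∧ x = L p γ'}) →
        ∀ e ∈ pathEdges γ, e ∈ c) = piStar E p S i := by
  classical
  set X := {x : ℝ | ∃ γ' : List V, IsPathFrom E S i γ' ∧ x = L p γ'} with hX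
  set π := sSup X with hπdef
  have hπpos : 0 < π := hpos
  have hXne : X.Nonempty := by
    by_contra h
    rw [Set.not_nonempty_iff_eq_empty] at h
    rw [hπdef, h, Real.sSup_empty] at hπpos
    exact lt_irrefl 0 hπpos
  have hpiStar : piStar E p S i = π := by
    rw [piStar, csSup_insert (Lset_bddAbove hp i) hXne]
    exact sup_eq_right.2 hπpos.le
  have hFi : Ffun E p S i = π := by
    rw [← piStar_eq_Ffun hp hi, hpiStar]
  obtain ⟨γb, hγb, hLγb⟩ := exists_max_path hp hi hXne
  have hPinfl : prob θs (fun c => influenced c S i) = π := by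
    rw [minimizer_infl hp hθs hmin i, hFi]
  have hAγ : ∀ γ : List V, IsPathFrom E S i γ → L p γ = π →
      prob θs (fun c => ∀ e ∈ pathEdges γ, e ∈ c) = π := by
    intro γ hγ hLγ
    have hge : 1 - Wt p γ ≤ prob θs (fun c => ∀ e ∈ pathEdges γ, e ∈ c) :=
      prob_live_ge hθs (pathEdges γ) (fun e he => chain'_pathEdges hγ.2.2.2 e he)
    have hLw : L p γ = 1 - Wt p γ := rfl
    have hle : prob θs (fun c => ∀ e ∈ pathEdges γ, e ∈ c) ≤ π := by
      rw [← hPinfl]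
      exact prob_mono hθs.1 (fun c hc => influenced_of_live hγ hc)
    rw [hLw] at hLγ
    linarith
  constructor
  · rw [hpiStar]
    apply le_antisymm
    · refine le_trans (prob_mono hθs.1 (fun c hc => ?_)) (le_of_eq hPinfl)
      obtain ⟨γ, ⟨hγ, _⟩, hlive⟩ := hc
      exact influenced_of_live hγ hlive
    · exact le_trans (le_of_eq (hAγ γb hγb hLγb).symm)
        (prob_mono hθs.1 (fun c hc => ⟨γb, ⟨hγb, hLγb⟩, hc⟩))
  · rw [hpiStar]
    have hBsub : ∀ c : Finset (V × V),
        (∀ γ : List V, (IsPathFrom E S i γ ∧ L p γ = π) → ∀ e ∈ pathEdges γ, e ∈ c) →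
          influenced c S i :=
      fun c hB => influenced_of_live hγb (hB γb ⟨hγb, hLγb⟩)
    have hdiff := prob_diff hθs.1 hBsub
    have hzero : prob θs (fun c => influenced c S i ∧
        ¬(∀ γ : List V, (IsPathFrom E S i γ ∧ L p γ = π) → ∀ e ∈ pathEdges γ, e ∈ c)) = 0 := by
      unfold prob
      apply Finset.sum_eq_zero
      intro c _
      split_ifs with hc
      · obtain ⟨hinfl, hnB⟩ := hc
        push_neg at hnB
        obtain ⟨γ, hγmax, e0, he0, he0c⟩ := hnB
        have hAγc := hAγ γ hγmax.1 hγmax.2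
        have hsub2 : ∀ c : Finset (V × V), (∀ e ∈ pathEdges γ, e ∈ c) → influenced c S i :=
          fun c h => influenced_of_live hγmax.1 h
        have hd2 := prob_diff hθs.1 hsub2
        rw [hPinfl, hAγc, sub_self] at hd2
        unfold prob at hd2
        have hterm := (Finset.sum_eq_zero_iff_of_nonneg (fun c _ => by
          split_ifs
          · exact hθs.1 _
          · exact le_rfl)).1 hd2.symm c (Finset.mem_univ c)
        rw [if_pos (show influenced c S i ∧ ¬(∀ e ∈ pathEdges γ, e ∈ c) from
          ⟨hinfl, fun h => he0c (h e0 he0)⟩)] at hterm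
        exact hterm
      · rfl
    rw [hzero] at hdiff
    linarith [hdiff, hPinfl]



end CorrIM
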